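/- In the descending-slope extension construction, let x̄ ∈ C, y ∈ X, and k ∈ ℤ be such that ε_{k−2} ≤ d(x̄,y) < ε_{k−1}. Then (f(y) − f(x̄))₋ / d(x̄,y) ≤ S_k^−(x̄) + 3L·ε_{k−2}/ε_{k−1}, where t₋ denotes the negative part. -/

import Mathlib

open Metric

set_option maxHeartbeats 2000000 in
/-- In the descending-slope extension construction, if `x̄ ∈ C`, `y ∈ X` and
`ε_{k−2} ≤ d(x̄,y) < ε_{k−1}`, then
`(f(y) − f(x̄))₋ / d(x̄,y) ≤ S_k^−(x̄) + 3L·ε_{k−2}/ε_{k−1}`. -/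
theorem descending_incremental_ratio_upper_bound
    {X : Type*} [MetricSpace X] (C : Set X) (hC : C.Nonempty)
    (g : X → ℝ) (L ε : ℝ) (hL : 0 < L) (hε : 0 < ε) (hεL : ε ≤ L)
    (hg : ∀ x ∈ C, ∀ y ∈ C, |g x - g y| ≤ L * dist x y)
    (e : ℤ → ℝ) (he : ∀ k : ℤ, 0 < e k)
    (hmono : ∀ k : ℤ, e (k - 1) / e k ≤ e k / e (k + 1))
    (hlim : Filter.Tendsto (fun k : ℤ => e (k - 1) / e k) Filter.atBot (nhds 0))
    (hratio : ∀ k : ℤ, e (k - 1) / e k ≤ ε / (3 * (L + ε)))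
    (S : X → ℤ → ℝ)
    (hS : ∀ x ∈ C, ∀ k : ℤ,
      S x k = sInf {ℓ : ℝ | 0 ≤ ℓ ∧ ∀ z ∈ C, dist z x < e k → max (g x - g z) 0 ≤ ℓ * dist x z})
    (pen : X → ℝ → ℝ)
    (hpen0 : ∀ x ∈ C, pen x 0 = 0)
    (hpennonneg : ∀ x ∈ C, ∀ t : ℝ, 0 ≤ t → 0 ≤ pen x t)
    (hpencont : ∀ x ∈ C, ContinuousOn (pen x) (Set.Ici 0))
    (hpenlin : ∀ x ∈ C, ∀ k : ℤ, ∀ s t : ℝ, e (k - 2) ≤ s → s ≤ t → t ≤ e (k - 1) →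
      pen x t - pen x s = (S x k + 3 * L * (e (k - 2) / e (k - 1))) * (t - s))
    (f : X → ℝ)
    (hf : ∀ y : X, f y = sSup ((fun x => g x - pen x (dist x y)) '' C))
    (xb : X) (hxb : xb ∈ C) (y : X) (k : ℤ)
    (hd1 : e (k - 2) ≤ dist xb y) (hd2 : dist xb y < e (k - 1)) :
    max (f xb - f y) 0 / dist xb y ≤ S xb k + 3 * L * (e (k - 2) / e (k - 1)) := by
  classical
  -- ratio bound 1/6
  have hrat6 : ∀ m : ℤ, e (m - 1) / e m ≤ 1 / 6 := by
    intro m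
    refine (hratio m).trans ?_
    rw [div_le_div_iff₀ (by nlinarith) (by norm_num)]
    nlinarith
  have hestep : ∀ m : ℤ, 6 * e (m - 1) ≤ e m := by
    intro m
    have h := hrat6 m
    rw [div_le_div_iff₀ (he m) (by norm_num)] at h
    linarith
  -- monotonicity of e
  have emono : ∀ a b : ℤ, a ≤ b → e a ≤ e b := by
    intro a b hab
    refine Int.le_induction (motive := fun b _ => e a ≤ e b) le_rfl ?_ b hab
    intro n hn ih
    refine ih.trans ?_
    have h2 := hestep (n + 1)
    have hp := he n
    have h1 : n + 1 - 1 = n := by ring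
    rw [h1] at h2
    linarith
  -- decay of e
  have edec : ∀ (m : ℤ) (n : ℕ), e (m - n) ≤ e m * (1 / 6) ^ n := by
    intro m n
    induction n with
    | zero => simp
    | succ n ih =>
        have h := hestep (m - n)
        have h1 : (m - (n : ℤ)) - 1 = m - (n + 1 : ℕ) := by push_cast; ring
        rw [h1] at h
        have hp := he (m - (n + 1 : ℕ))
        calc e (m - (n + 1 : ℕ)) ≤ e (m - n) / 6 := by linarith
        _ ≤ e m * (1 / 6) ^ n / 6 := by linarith [ih]
        _ = e m * (1 / 6) ^ (n + 1) := by ring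
  -- growth of e
  have egrow : ∀ (m : ℤ) (n : ℕ), e m * 6 ^ n ≤ e (m + n) := by
    intro m n
    induction n with
    | zero => simp
    | succ n ih =>
        have h := hestep (m + n + 1)
        have h1 : (m + (n : ℤ) + 1) - 1 = m + n := by ring
        rw [h1] at h
        have h2 : m + ((n : ℤ) + 1) = m + n + 1 := by ring
        push_cast
        rw [h2]
        calc e m * 6 ^ (n + 1) = 6 * (e m * 6 ^ n) := by ring
        _ ≤ 6 * e (m + n) := by linarith
        _ ≤ e (m + n + 1) := h
  -- tendsto 0
  have etend : ∀ m : ℤ, Filter.Tendsto (fun n : ℕ => e (m - n)) Filter.atTop (nhds 0) := by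
    intro m
    apply squeeze_zero (fun n => (he _).le) (fun n => edec m n)
    have : Filter.Tendsto (fun n : ℕ => ((1:ℝ) / 6) ^ n) Filter.atTop (nhds 0) :=
      tendsto_pow_atTop_nhds_zero_of_lt_one (by norm_num) (by norm_num)
    simpa using this.const_mul (e m)
  have exupper : ∀ t : ℝ, ∃ m : ℤ, t < e m := by
    intro t
    obtain ⟨n, hn⟩ := pow_unbounded_of_one_lt (t / e 0) (by norm_num : (1:ℝ) < 6)
    refine ⟨0 + n, ?_⟩
    have := egrow 0 n
    have h0 := he 0
    have : t < e 0 * 6 ^ n := by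
      rw [div_lt_iff₀ h0] at hn; linarith [mul_comm (e 0) ((6:ℝ) ^ n)]
    linarith [egrow 0 n]
  have exlower : ∀ t : ℝ, 0 < t → ∃ m : ℤ, e m ≤ t := by
    intro t ht
    have := (etend 0).eventually_lt_const ht
    obtain ⟨n, hn⟩ := this.exists
    exact ⟨0 - n, hn.le⟩
  -- find the interval index for t > 0
  have findIdx : ∀ t : ℝ, 0 < t → ∃ j : ℤ, e (j - 2) ≤ t ∧ t < e (j - 1) := by
    intro t ht
    obtain ⟨m₀, hm₀⟩ := exlower t ht
    obtain ⟨m₁, hm₁⟩ := exupper t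
    have hbdd : ∃ b : ℤ, ∀ z : ℤ, t < e (z - 1) → b ≤ z := by
      refine ⟨m₀ + 2, fun z hz => ?_⟩
      by_contra hc
      push_neg at hc
      have : e (z - 1) ≤ e m₀ := emono _ _ (by omega)
      linarith
    obtain ⟨j, hj1, hj2⟩ := Int.exists_least_of_bdd hbdd ⟨m₁ + 1, by simpa using hm₁⟩
    refine ⟨j, ?_, hj1⟩
    by_contra hc
    push_neg at hc
    have harg : t < e (j - 1 - 1) := by
      have h : j - 1 - 1 = j - 2 := by ring
      rw [h]; exact hc
    have := hj2 (j - 1) harg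
    omega
  -- feasible set facts
  have hLmem : ∀ x ∈ C, ∀ m : ℤ,
      L ∈ {ℓ : ℝ | 0 ≤ ℓ ∧ ∀ z ∈ C, dist z x < e m → max (g x - g z) 0 ≤ ℓ * dist x z} := by
    intro x hx m
    refine ⟨hL.le, fun z hz _ => ?_⟩
    refine max_le ?_ (by positivity)
    calc g x - g z ≤ |g x - g z| := le_abs_self _
    _ ≤ L * dist x z := hg x hx z hz
  have S_nonneg : ∀ x ∈ C, ∀ m : ℤ, 0 ≤ S x m := by
    intro x hx m
    rw [hS x hx m]
    exact le_csInf ⟨L, hLmem x hx m⟩ (fun ℓ hℓ => hℓ.1)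
  have S_le_L : ∀ x ∈ C, ∀ m : ℤ, S x m ≤ L := by
    intro x hx m
    rw [hS x hx m]
    exact csInf_le ⟨0, fun ℓ hℓ => hℓ.1⟩ (hLmem x hx m)
  have S_mono : ∀ x ∈ C, ∀ a b : ℤ, a ≤ b → S x a ≤ S x b := by
    intro x hx a b hab
    rw [hS x hx a, hS x hx b]
    refine csInf_le_csInf ⟨0, fun ℓ hℓ => hℓ.1⟩ ⟨L, hLmem x hx b⟩ ?_
    rintro ℓ ⟨h0, hℓ⟩
    exact ⟨h0, fun z hz hdz => hℓ z hz (hdz.trans_le (emono a b hab))⟩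
  have Sfeas : ∀ x ∈ C, ∀ m : ℤ, ∀ z ∈ C, dist z x < e m → g x - g z ≤ S x m * dist x z := by
    intro x hx m z hz hdz
    rcases eq_or_lt_of_le (dist_nonneg : (0:ℝ) ≤ dist x z) with h0 | h0
    · have : |g x - g z| ≤ 0 := by
        have := hg x hx z hz
        rw [← h0] at this
        linarith
      have h1 : g x - g z ≤ 0 := (le_abs_self _).trans this
      rw [← h0, mul_zero]
      exact h1
    · have hq : (g x - g z) / dist x z ≤ S x m := by
        rw [hS x hx m]
        refine le_csInf ⟨L, hLmem x hx m⟩ ?_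
        rintro ℓ ⟨hℓ0, hℓ⟩
        rw [div_le_iff₀ h0]
        exact (le_max_left _ _).trans (hℓ z hz hdz)
      calc g x - g z = (g x - g z) / dist x z * dist x z := by field_simp
      _ ≤ S x m * dist x z := mul_le_mul_of_nonneg_right hq h0.le
  -- ratio monotone
  have rmono : ∀ a b : ℤ, a ≤ b → e (a - 1) / e a ≤ e (b - 1) / e b := by
    intro a b hab
    refine Int.le_induction (motive := fun b _ => e (a - 1) / e a ≤ e (b - 1) / e b) le_rfl ?_ b hab
    intro n hn ih
    refine ih.trans ?_
    have h := hmono n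
    have h1 : n + 1 - 1 = n := by ring
    rw [h1]
    exact h
  -- slope bounds
  have sl_nonneg : ∀ x ∈ C, ∀ m : ℤ, 0 ≤ S x m + 3 * L * (e (m - 2) / e (m - 1)) := by
    intro x hx m
    have h0 := S_nonneg x hx m
    have h1 := div_nonneg (he (m - 2)).le (he (m - 1)).le
    nlinarith
  have sl_le : ∀ x ∈ C, ∀ m : ℤ, S x m + 3 * L * (e (m - 2) / e (m - 1)) ≤ 3 / 2 * L := by
    intro x hx m
    have h1 := S_le_L x hx m
    have h2 : e (m - 1 - 1) / e (m - 1) ≤ 1 / 6 := hrat6 (m - 1)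
    have h3 : m - 1 - 1 = m - 2 := by ring
    rw [h3] at h2
    have h4 : 0 ≤ e (m - 2) / e (m - 1) := div_nonneg (he _).le (he _).le
    nlinarith
  -- workhorse: bounds on pen increments over [s,t] with s in interval j, t ≤ e (j-1+n)
  have P : ∀ x ∈ C, ∀ (M : ℝ) (n : ℕ), ∀ j : ℤ,
      (∀ m : ℤ, m ≤ j + n → S x m + 3 * L * (e (m - 2) / e (m - 1)) ≤ M) →
      ∀ s t : ℝ, e (j - 2) ≤ s → s ≤ t → t ≤ e (j - 1 + n) →
      0 ≤ pen x t - pen x s ∧ pen x t - pen x s ≤ M * (t - s) := by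
    intro x hx M n
    induction n with
    | zero =>
        intro j hM s t hs hst ht
        have ht' : t ≤ e (j - 1) := by simpa using ht
        have heq := hpenlin x hx j s t hs hst ht'
        have h0 := sl_nonneg x hx j
        have h1 := hM j (by simp)
        constructor
        · rw [heq]; exact mul_nonneg h0 (by linarith)
        · rw [heq]; exact mul_le_mul_of_nonneg_right h1 (by linarith)
    | succ n ih =>
        intro j hM s t hs hst ht
        by_cases hc : t ≤ e (j - 1)
        · have heq := hpenlin x hx j s t hs hst hc
          have h0 := sl_nonneg x hx j
          have h1 := hM j (by push_cast; omega)
          constructor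
          · rw [heq]; exact mul_nonneg h0 (by linarith)
          · rw [heq]; exact mul_le_mul_of_nonneg_right h1 (by linarith)
        · push_neg at hc
          have hMj : ∀ m : ℤ, m ≤ (j + 1) + n → S x m + 3 * L * (e (m - 2) / e (m - 1)) ≤ M := by
            intro m hm
            exact hM m (by push_cast at hm ⊢; omega)
          have hteq : t ≤ e ((j + 1) - 1 + n) := by
            have hidx : ((j + 1) - 1 + (n : ℤ)) = (j - 1 + ((n : ℤ) + 1)) := by ring
            rw [hidx]
            have : (j - 1 + ((n : ℤ) + 1)) = (j - 1 + ((n + 1 : ℕ) : ℤ)) := by push_cast; ring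
            rw [this]
            exact ht
          by_cases hs' : e (j - 1) ≤ s
          · refine ih (j + 1) hMj s t ?_ hst hteq
            have hidx : (j + 1) - 2 = j - 1 := by ring
            rw [hidx]; exact hs'
          · push_neg at hs'
            have hmid := hpenlin x hx j s (e (j - 1)) hs hs'.le le_rfl
            have h2 := ih (j + 1) hMj (e (j - 1)) t
              (by rw [show (j + 1) - 2 = j - 1 by ring]) hc.le hteq
            have h0 := sl_nonneg x hx j
            have h1 := hM j (by push_cast; omega)
            have hd : 0 ≤ e (j - 1) - s := by linarith
            constructor
            · nlinarith [h2.1, mul_nonneg h0 hd]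
            · nlinarith [h2.2, mul_le_mul_of_nonneg_right h1 hd]
  -- global monotonicity / Lipschitz bound for pen (s > 0)
  have pen_bnd : ∀ x ∈ C, ∀ s t : ℝ, 0 < s → s ≤ t →
      0 ≤ pen x t - pen x s ∧ pen x t - pen x s ≤ 3 / 2 * L * (t - s) := by
    intro x hx s t hs hst
    obtain ⟨j, hj1, hj2⟩ := findIdx s hs
    obtain ⟨m', hm'⟩ := exupper t
    have hn : (m' : ℤ) ≤ j - 1 + ((m' - (j - 1)).toNat : ℤ) := by omega
    exact P x hx (3 / 2 * L) (m' - (j - 1)).toNat j (fun m _ => sl_le x hx m) s t hj1 hst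
      (le_of_lt (hm'.trans_le (emono _ _ hn)))
  -- upper bound pen x t ≤ M t via limit at 0
  have pen_ub : ∀ x ∈ C, ∀ (M : ℝ) (k₀ : ℤ),
      (∀ m : ℤ, m ≤ k₀ → S x m + 3 * L * (e (m - 2) / e (m - 1)) ≤ M) →
      ∀ t : ℝ, 0 ≤ t → t < e (k₀ - 1) → pen x t ≤ M * t := by
    intro x hx M k₀ hM t ht0 htk
    rcases eq_or_lt_of_le ht0 with h0 | h0
    · rw [← h0, hpen0 x hx, mul_zero]
    · obtain ⟨j, hj1, hj2⟩ := findIdx t h0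
      have hjk : j ≤ k₀ := by
        by_contra hcon
        push_neg at hcon
        have : e (k₀ - 1) ≤ e (j - 2) := emono _ _ (by omega)
        linarith
      have chain : ∀ n : ℕ, pen x t - pen x (e (j - 2 - n)) ≤ M * (t - e (j - 2 - n)) := by
        intro n
        have hc2 : (j - (n : ℤ)) - 2 = j - 2 - n := by ring
        refine (P x hx M n (j - n) (fun m hm => hM m (by omega)) (e (j - 2 - n)) t
          (by rw [hc2]) ((emono _ _ (by omega)).trans hj1) ?_).2
        rw [show (j - (n : ℤ)) - 1 + n = j - 1 by ring]
        exact hj2.le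
      have tend1 : Filter.Tendsto (fun n : ℕ => e (j - 2 - n)) Filter.atTop (nhds 0) :=
        etend (j - 2)
      have tend2 : Filter.Tendsto (fun n : ℕ => pen x (e (j - 2 - n)) - M * e (j - 2 - n))
          Filter.atTop (nhds 0) := by
        have hcont : ContinuousWithinAt (pen x) (Set.Ici 0) 0 :=
          hpencont x hx 0 Set.self_mem_Ici
        have h1 : Filter.Tendsto (fun n : ℕ => e (j - 2 - n)) Filter.atTop
            (nhdsWithin 0 (Set.Ici 0)) :=
          tendsto_nhdsWithin_of_tendsto_nhds_of_eventually_within _ tend1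
            (Filter.Eventually.of_forall (fun n => (he _).le))
        have h2 := hcont.tendsto.comp h1
        rw [hpen0 x hx] at h2
        simpa using h2.sub (tend1.const_mul M)
      have hfin : pen x t - M * t ≤ 0 :=
        ge_of_tendsto' tend2 (fun n => by linarith [chain n])
      linarith
  -- key extension inequality: g x - g w ≤ pen x (dist x w)
  have key : ∀ x ∈ C, ∀ w ∈ C, g x - g w ≤ pen x (dist x w) := by
    intro x hx w hw
    rcases eq_or_lt_of_le (dist_nonneg : (0:ℝ) ≤ dist x w) with h0 | h0
    · have h1 := hg x hx w hw
      rw [← h0, mul_zero] at h1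
      rw [← h0, hpen0 x hx]
      linarith [le_abs_self (g x - g w)]
    · obtain ⟨j, hj1, hj2⟩ := findIdx (dist x w) h0
      have hfeas : g x - g w ≤ S x (j - 1) * dist x w := by
        refine Sfeas x hx (j - 1) w hw ?_
        rw [dist_comm]; exact hj2
      have hidx1 : (j - 1) - 2 = j - 3 := by ring
      have hidx2 : (j - 1) - 1 = j - 2 := by ring
      have hA := hpenlin x hx j (e (j - 2)) (dist x w) le_rfl hj1 hj2.le
      have hB := hpenlin x hx (j - 1) (e (j - 3)) (e (j - 2))
        (by rw [hidx1]) (emono _ _ (by omega)) (by rw [hidx2])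
      rw [hidx1, hidx2] at hB
      have hC := hpennonneg x hx (e (j - 3)) (he _).le
      have hS1 := S_mono x hx (j - 1) j (by omega)
      have hS2 := S_le_L x hx (j - 1)
      have hS0 := S_nonneg x hx (j - 1)
      have hr : e (j - 3) / e (j - 2) ≤ 1 / 6 := by
        have := hrat6 (j - 2)
        rwa [show j - 2 - 1 = j - 3 by ring] at this
      have hcancel : e (j - 3) / e (j - 2) * e (j - 2) = e (j - 3) :=
        div_mul_cancel₀ _ (he (j - 2)).ne'
      have hrj0 : 0 ≤ e (j - 2) / e (j - 1) := div_nonneg (he _).le (he _).le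
      have hr0 : 0 ≤ e (j - 3) / e (j - 2) := div_nonneg (he _).le (he _).le
      have he32 : e (j - 3) ≤ e (j - 2) := emono _ _ (by omega)
      have he3 : 0 < e (j - 3) := he _
      refine hfeas.trans ?_
      have t1 : 0 ≤ (S x j - S x (j - 1)) * (dist x w - e (j - 2)) :=
        mul_nonneg (by linarith) (by linarith)
      have t2 : 0 ≤ 3 * L * (e (j - 2) / e (j - 1)) * (dist x w - e (j - 2)) :=
        mul_nonneg (mul_nonneg (by linarith) hrj0) (by linarith)
      have t3 : e (j - 3) / e (j - 2) * (e (j - 2) - e (j - 3))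
          = e (j - 3) - e (j - 3) / e (j - 2) * e (j - 3) := by
        rw [mul_sub, hcancel]
      have t4 : e (j - 3) / e (j - 2) * e (j - 3) ≤ 1 / 6 * e (j - 3) :=
        mul_le_mul_of_nonneg_right hr he3.le
      have t5 : (L - S x (j - 1)) * e (j - 3) ≥ 0 := mul_nonneg (by linarith) he3.le
      nlinarith [hA, hB, hC, t1, t2, t3, t4, t5]
  -- monotonicity from 0 and Lipschitz bound allowing b = 0
  have mono0 : ∀ x ∈ C, ∀ a b : ℝ, 0 ≤ b → b ≤ a → pen x b ≤ pen x a := by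
    intro x hx a b hb hba
    rcases eq_or_lt_of_le hb with hb0 | hb0
    · rw [← hb0, hpen0 x hx]
      exact hpennonneg x hx a (by linarith)
    · linarith [(pen_bnd x hx b a hb0 hba).1]
  have lip0 : ∀ x ∈ C, ∀ a b : ℝ, 0 ≤ b → b ≤ a → pen x a - pen x b ≤ 3 / 2 * L * (a - b) := by
    intro x hx a b hb hba
    rcases eq_or_lt_of_le hb with hb0 | hb0
    · obtain ⟨m, hm⟩ := exupper a
      have := pen_ub x hx (3 / 2 * L) (m + 1) (fun m' _ => sl_le x hx m') a (by linarith)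
        (by rw [show m + 1 - 1 = m by ring]; exact hm)
      rw [← hb0, hpen0 x hx]
      linarith
    · exact (pen_bnd x hx b a hb0 hba).2
  -- f xb ≤ g xb
  have fxb_le : f xb ≤ g xb := by
    rw [hf xb]
    refine csSup_le ⟨g xb - pen xb (dist xb xb), ⟨xb, hxb, rfl⟩⟩ ?_
    rintro v ⟨x, hxC, rfl⟩
    dsimp only
    linarith [key x hxC xb hxb]
  have hDpos : (0:ℝ) < dist xb y := lt_of_lt_of_le (he (k - 2)) hd1
  -- image bounded above
  have bddA : BddAbove ((fun x => g x - pen x (dist x y)) '' C) := by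
    refine ⟨g xb + 3 / 2 * L * dist xb y, ?_⟩
    rintro v ⟨x, hxC, rfl⟩
    dsimp only
    have hkey := key x hxC xb hxb
    rcases le_or_gt (dist x xb) (dist x y) with hab | hab
    · have := mono0 x hxC (dist x y) (dist x xb) dist_nonneg hab
      nlinarith [dist_nonneg (x := xb) (y := y)]
    · have h1 := lip0 x hxC (dist x xb) (dist x y) dist_nonneg hab.le
      have h2 : dist x xb ≤ dist x y + dist xb y := by
        rw [dist_comm xb y]
        exact dist_triangle x y xb
      nlinarith
  have fy_ge : g xb - pen xb (dist xb y) ≤ f y := by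
    rw [hf y]
    exact le_csSup bddA ⟨xb, hxb, rfl⟩
  -- slopes below k are bounded by the slope at k
  have hMk : ∀ m : ℤ, m ≤ k → S xb m + 3 * L * (e (m - 2) / e (m - 1))
      ≤ S xb k + 3 * L * (e (k - 2) / e (k - 1)) := by
    intro m hm
    have h1 := S_mono xb hxb m k hm
    have h2 : e (m - 2) / e (m - 1) ≤ e (k - 2) / e (k - 1) := by
      have := rmono (m - 1) (k - 1) (by omega)
      rwa [show m - 1 - 1 = m - 2 by ring, show k - 1 - 1 = k - 2 by ring] at this
    nlinarith
  have hpenD : pen xb (dist xb y) ≤ (S xb k + 3 * L * (e (k - 2) / e (k - 1))) * dist xb y :=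
    pen_ub xb hxb _ k hMk _ dist_nonneg hd2
  have hM0 : 0 ≤ S xb k + 3 * L * (e (k - 2) / e (k - 1)) := sl_nonneg xb hxb k
  rw [div_le_iff₀ hDpos]
  refine max_le ?_ (mul_nonneg hM0 hDpos.le)
  linarith
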